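/- arXiv:2212.06401 — 2 statements merged into one kernel-verified Lean document; each statement's English description precedes it below -/
import Mathlib

section
/- Consider a definably complete locally o-minimal expansion 𝓕 = (F, <, +, ·, 0, 1, …) of an ordered field. Let X be a definable closed set and E a definable equivalence relation on X which is closed in X × X. Let K be a definable closed subset of X, set E_K = E ∩ (K × K), and let p₁, p₂ : E → X be the restrictions to E of the two projections X × X → X. Assume that the restriction of p₁ to p₂⁻¹(K) is definably identifying (onto X). Then a definable quotient of X by E exists if and only if a definable quotient of K by E_K exists; moreover, if f : X → Y is a definable quotient of X by E, then the restriction f|_K : K → Y is a definable quotient of K by E_K. -/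
open FirstOrder Set Topology Filter

section Defs

variable {F : Type*}

/-- A subset of `F^α` is definable (with parameters) in the structure. -/
def IsDef (L : FirstOrder.Language) [L.Structure F] {α : Type} (s : Set (α → F)) : Prop :=
  Set.Definable (Set.univ : Set F) L s

/-- The structure is an expansion of the ordered field `F`: the order, addition and
multiplication are definable. -/
def IsOrderedFieldExpansion (L : FirstOrder.Language) [L.Structure F]
    [Field F] [LinearOrder F] [IsStrictOrderedRing F] : Prop :=
  IsDef L {v : Fin 2 → F | v 0 < v 1} ∧
  IsDef L {v : Fin 3 → F | v 0 + v 1 = v 2} ∧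
  IsDef L {v : Fin 3 → F | v 0 * v 1 = v 2}

/-- The structure is an expansion of the ordered (additive) group `F`. -/
def IsOrderedGroupExpansion (L : FirstOrder.Language) [L.Structure F]
    [AddCommGroup F] [LinearOrder F] [IsOrderedAddMonoid F] : Prop :=
  IsDef L {v : Fin 2 → F | v 0 < v 1} ∧
  IsDef L {v : Fin 3 → F | v 0 + v 1 = v 2}

/-- The structure is an expansion of the dense linear order `F`. -/
def IsOrderExpansion (L : FirstOrder.Language) [L.Structure F] [LinearOrder F] : Prop :=
  IsDef L {v : Fin 2 → F | v 0 < v 1}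

/-- Definable completeness: every nonempty definable subset of `F` which is bounded
above (below) has a supremum (infimum) in `F`; equivalently every definable subset of `F`
has a supremum and an infimum in `F ∪ {±∞}`. -/
def DefinablyComplete (L : FirstOrder.Language) [L.Structure F] [LinearOrder F] : Prop :=
  ∀ s : Set F, IsDef L {v : Fin 1 → F | v 0 ∈ s} → s.Nonempty →
    (BddAbove s → ∃ a, IsLUB s a) ∧ (BddBelow s → ∃ a, IsGLB s a)

/-- Local o-minimality: every definable subset of `F` is, near each point, a finite union
of points and open intervals. -/
def LocallyOMinimal (L : FirstOrder.Language) [L.Structure F] [LinearOrder F] : Prop :=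
  ∀ s : Set F, IsDef L {v : Fin 1 → F | v 0 ∈ s} → ∀ a : F,
    ∃ b c : F, b < a ∧ a < c ∧ ∃ (P : Finset F) (I : Finset (F × F)),
      s ∩ Set.Ioo b c = ↑P ∪ ⋃ p ∈ I, Set.Ioo p.1 p.2

/-- A subset of `F^α` is bounded if it is contained in a box. -/
def IsBdd [LE F] {α : Type} (s : Set (α → F)) : Prop :=
  ∃ a b : F, ∀ v ∈ s, ∀ i, a ≤ v i ∧ v i ≤ b

/-- `s` is closed in the subspace `Y` (for `s ⊆ Y`). -/
def ClosedIn {X : Type*} [TopologicalSpace X] (Y s : Set X) : Prop :=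
  Y ∩ closure s ⊆ s

/-- `s` is open in the subspace `Y`. -/
def OpenIn {X : Type*} [TopologicalSpace X] (Y s : Set X) : Prop :=
  ∃ V, IsOpen V ∧ s = Y ∩ V

/-- A map `f` defined on `X ⊆ F^α` with values in `F^β` is definable: its graph is a
definable subset of `F^(α ⊕ β)`. -/
def IsDefFunOn (L : FirstOrder.Language) [L.Structure F] {α β : Type}
    (X : Set (α → F)) (f : (α → F) → (β → F)) : Prop :=
  IsDef L {v : α ⊕ β → F | (v ∘ Sum.inl) ∈ X ∧ f (v ∘ Sum.inl) = v ∘ Sum.inr}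

/-- An `F`-valued map defined on `X ⊆ F^α` is definable. -/
def IsDefFunOn₁ (L : FirstOrder.Language) [L.Structure F] {α : Type}
    (X : Set (α → F)) (f : (α → F) → F) : Prop :=
  IsDef L {v : α ⊕ Unit → F | (v ∘ Sum.inl) ∈ X ∧ f (v ∘ Sum.inl) = v (Sum.inr ())}

/-- `f : X → Y` is definably proper: preimages of definable closed bounded subsets of `Y`
are closed and bounded. -/
def IsDefProper (L : FirstOrder.Language) [L.Structure F] [LE F] [TopologicalSpace F]
    {α β : Type} (X : Set (α → F)) (Y : Set (β → F)) (f : (α → F) → (β → F)) : Prop :=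
  ∀ K : Set (β → F), IsDef L K → K ⊆ Y → IsClosed K → IsBdd K →
    IsClosed {x | x ∈ X ∧ f x ∈ K} ∧ IsBdd {x | x ∈ X ∧ f x ∈ K}

/-- `f : X → Y` is definably identifying: it is surjective onto `Y` and a definable subset
`K` of `Y` is closed in `Y` whenever `f⁻¹(K)` is closed in `X`. -/
def IsDefIdentifying (L : FirstOrder.Language) [L.Structure F] [TopologicalSpace F]
    {α β : Type} (X : Set (α → F)) (Y : Set (β → F)) (f : (α → F) → (β → F)) : Prop :=
  (∀ y ∈ Y, ∃ x ∈ X, f x = y) ∧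
  ∀ K : Set (β → F), IsDef L K → K ⊆ Y →
    ClosedIn X {x | x ∈ X ∧ f x ∈ K} → ClosedIn Y K

/-- A definable curve in `X` defined on the interval `(0, ε)`. -/
def IsDefCurve (L : FirstOrder.Language) [L.Structure F] [LinearOrder F] [Zero F]
    [TopologicalSpace F] {α : Type} (ε : F) (X : Set (α → F)) (γ : F → (α → F)) : Prop :=
  IsDef L {v : Unit ⊕ α → F |
      v (Sum.inl ()) ∈ Set.Ioo 0 ε ∧ γ (v (Sum.inl ())) = v ∘ Sum.inr} ∧
  ContinuousOn γ (Set.Ioo 0 ε) ∧ MapsTo γ (Set.Ioo 0 ε) X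

/-- The curve `γ : (0,ε) → F^α` tends to `x` as `t → 0⁺`. -/
def CurveTendsto [LinearOrder F] [Zero F] [TopologicalSpace F] {α : Type}
    (ε : F) (γ : F → (α → F)) (x : α → F) : Prop :=
  Filter.Tendsto γ (nhdsWithin 0 (Set.Ioo 0 ε)) (nhds x)

/-- The curve `γ : (0,ε) → F^α` is completable in `X`. -/
def Completable [LinearOrder F] [Zero F] [TopologicalSpace F] {α : Type}
    (ε : F) (X : Set (α → F)) (γ : F → (α → F)) : Prop :=
  ∃ x ∈ X, CurveTendsto ε γ x

/-- `E ⊆ F^(α⊕α)` is a definable equivalence relation on `X ⊆ F^α`; the pair `(x, y)` is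
encoded as `Sum.elim x y`. -/
def IsDefEquivOn (L : FirstOrder.Language) [L.Structure F] {α : Type}
    (X : Set (α → F)) (E : Set (α ⊕ α → F)) : Prop :=
  IsDef L E ∧
  (∀ v ∈ E, v ∘ Sum.inl ∈ X ∧ v ∘ Sum.inr ∈ X) ∧
  (∀ x ∈ X, Sum.elim x x ∈ E) ∧
  (∀ x y : α → F, Sum.elim x y ∈ E → Sum.elim y x ∈ E) ∧
  (∀ x y z : α → F, Sum.elim x y ∈ E → Sum.elim y z ∈ E → Sum.elim x z ∈ E)

/-- `f : X → Y` is a definable quotient of `X` by the definable equivalence relation `E`: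
a definable, continuous, definably identifying map onto the definable set `Y` whose fibers
are exactly the equivalence classes of `E`. -/
def IsDefQuotient (L : FirstOrder.Language) [L.Structure F] [TopologicalSpace F]
    {α β : Type} (X : Set (α → F)) (E : Set (α ⊕ α → F))
    (Y : Set (β → F)) (f : (α → F) → (β → F)) : Prop :=
  IsDef L Y ∧ IsDefFunOn L X f ∧ ContinuousOn f X ∧ MapsTo f X Y ∧
  IsDefIdentifying L X Y f ∧
  ∀ x ∈ X, ∀ x' ∈ X, (f x = f x' ↔ Sum.elim x x' ∈ E)

/-- A definable group: a definable set `G ⊆ F^κ` with definable continuous group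
operations. -/
structure IsDefGroup (L : FirstOrder.Language) [L.Structure F] [TopologicalSpace F]
    {κ : Type} (G : Set (κ → F)) (mul : (κ → F) → (κ → F) → (κ → F))
    (inv : (κ → F) → (κ → F)) (e : κ → F) : Prop where
  defG : IsDef L G
  defMul : IsDef L {v : (κ ⊕ κ) ⊕ κ → F |
    (v ∘ Sum.inl ∘ Sum.inl) ∈ G ∧ (v ∘ Sum.inl ∘ Sum.inr) ∈ G ∧
    mul (v ∘ Sum.inl ∘ Sum.inl) (v ∘ Sum.inl ∘ Sum.inr) = v ∘ Sum.inr}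
  defInv : IsDef L {v : κ ⊕ κ → F | (v ∘ Sum.inl) ∈ G ∧ inv (v ∘ Sum.inl) = v ∘ Sum.inr}
  contMul : ContinuousOn (fun p : (κ → F) × (κ → F) => mul p.1 p.2) (G ×ˢ G)
  contInv : ContinuousOn inv G
  e_mem : e ∈ G
  mul_mem : ∀ g ∈ G, ∀ h ∈ G, mul g h ∈ G
  inv_mem : ∀ g ∈ G, inv g ∈ G
  mul_assoc' : ∀ g ∈ G, ∀ h ∈ G, ∀ k ∈ G, mul (mul g h) k = mul g (mul h k)
  one_mul' : ∀ g ∈ G, mul e g = g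
  mul_one' : ∀ g ∈ G, mul g e = g
  inv_mul' : ∀ g ∈ G, mul (inv g) g = e
  mul_inv' : ∀ g ∈ G, mul g (inv g) = e

/-- A definable (continuous) action of the definable group `G` on the definable set `X`,
making `X` a definable `G`-set. -/
structure IsDefAction (L : FirstOrder.Language) [L.Structure F] [TopologicalSpace F]
    {κ μ : Type} (G : Set (κ → F)) (mul : (κ → F) → (κ → F) → (κ → F)) (e : κ → F)
    (X : Set (μ → F)) (act : (κ → F) → (μ → F) → (μ → F)) : Prop where
  defAct : IsDef L {v : (κ ⊕ μ) ⊕ μ → F |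
    (v ∘ Sum.inl ∘ Sum.inl) ∈ G ∧ (v ∘ Sum.inl ∘ Sum.inr) ∈ X ∧
    act (v ∘ Sum.inl ∘ Sum.inl) (v ∘ Sum.inl ∘ Sum.inr) = v ∘ Sum.inr}
  contAct : ContinuousOn (fun p : (κ → F) × (μ → F) => act p.1 p.2) (G ×ˢ X)
  act_mem : ∀ g ∈ G, ∀ x ∈ X, act g x ∈ X
  act_e : ∀ x ∈ X, act e x = x
  act_mul : ∀ g ∈ G, ∀ h ∈ G, ∀ x ∈ X, act (mul g h) x = act g (act h x)

end Defs


section Aux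

open FirstOrder.Language

set_option linter.unusedSectionVars false

variable {F : Type*} [Field F] [LinearOrder F] [IsStrictOrderedRing F] [TopologicalSpace F] [OrderTopology F]
  {L : FirstOrder.Language} [L.Structure F]

lemma isDef_subst2 (s : Set (Fin 2 → F)) (hs : IsDef L s) {α : Type}
    (t : Fin 2 → L[[(Set.univ : Set F)]].Term α) :
    IsDef L {y : α → F | (fun j => (t j).realize y) ∈ s} := by
  obtain ⟨φ, hφ⟩ := hs
  refine ⟨φ.subst t, ?_⟩
  ext y
  have h2 := Set.ext_iff.1 hφ (fun j => (t j).realize y)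
  simp only [Set.mem_setOf_eq] at h2 ⊢
  rw [Formula.Realize, BoundedFormula.realize_subst, h2]
  rfl

lemma isDef_lt_const (hlt : IsDef L {v : Fin 2 → F | v 0 < v 1}) {α : Type} (i : α) (a : F) :
    IsDef L {y : α → F | a < y i} := by
  have := isDef_subst2 _ hlt (α := α) ![(L.con ⟨a, Set.mem_univ a⟩).term, .var i]
  convert this using 1
  rfl

lemma isDef_const_lt (hlt : IsDef L {v : Fin 2 → F | v 0 < v 1}) {α : Type} (i : α) (a : F) :
    IsDef L {y : α → F | y i < a} := by
  have := isDef_subst2 _ hlt (α := α) ![.var i, (L.con ⟨a, Set.mem_univ a⟩).term]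
  convert this using 1
  rfl

lemma closed_of_closedIn {Z : Type*} [TopologicalSpace Z] {Y s : Set Z}
    (hY : IsClosed Y) (hs : s ⊆ Y) (h : ClosedIn Y s) : IsClosed s := by
  have hcY : closure s ⊆ Y := hY.closure_subset_iff.2 hs
  exact isClosed_of_closure_subset (fun x hx => h ⟨hcY hx, hx⟩)

lemma isDef_preimage_fiber {α β : Type} [Finite α] [Finite β] {X : Set (α → F)}
    {f : (α → F) → (β → F)} (hf : IsDefFunOn L X f) {C : Set (β → F)} (hC : IsDef L C) :
    IsDef L {x | x ∈ X ∧ f x ∈ C} := by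
  have h1 : IsDef L ({v : α ⊕ β → F | (v ∘ Sum.inl) ∈ X ∧ f (v ∘ Sum.inl) = v ∘ Sum.inr}
      ∩ {v | v ∘ Sum.inr ∈ C}) := Set.Definable.inter hf (Set.Definable.preimage_comp Sum.inr hC)
  have h2 : IsDef L _ := Set.Definable.image_comp h1 Sum.inl
  convert h2 using 1
  ext x
  constructor
  · rintro ⟨hx, hfx⟩
    exact ⟨Sum.elim x (f x), ⟨⟨by simpa, by simp⟩, by simpa⟩, Sum.elim_comp_inl _ _⟩
  · rintro ⟨v, ⟨⟨h1', h2'⟩, h3'⟩, rfl⟩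
    exact ⟨h1', h2' ▸ h3'⟩

lemma continuousOn_criterion {α β : Type} {X : Set (α → F)} {f : (α → F) → (β → F)}
    (hlt : IsDef L {v : Fin 2 → F | v 0 < v 1})
    (h : ∀ C : Set (β → F), IsDef L C → IsClosed C → ClosedIn X {x | x ∈ X ∧ f x ∈ C}) :
    ContinuousOn f X := by
  intro x₀ hx₀
  rw [ContinuousWithinAt, tendsto_pi_nhds]
  intro i
  rw [(nhds_basis_Ioo (f x₀ i)).tendsto_right_iff]
  rintro ⟨c, d⟩ ⟨hc, hd⟩
  set C : Set (β → F) := ({y | c < y i} ∩ {y | y i < d})ᶜ with hC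
  have hCdef : IsDef L C := Set.Definable.compl
    (Set.Definable.inter (isDef_lt_const hlt i c) (isDef_const_lt hlt i d))
  have hCclosed : IsClosed C := by
    have : IsOpen ({y : β → F | c < y i} ∩ {y | y i < d}) :=
      (isOpen_lt continuous_const (continuous_apply i)).inter
        (isOpen_lt (continuous_apply i) continuous_const)
    exact this.isClosed_compl
  have hS := h C hCdef hCclosed
  have hx₀S : x₀ ∉ closure {x | x ∈ X ∧ f x ∈ C} := by
    intro hmem
    exact (hS ⟨hx₀, hmem⟩).2 ⟨hc, hd⟩
  refine Filter.eventually_iff.2 (mem_nhdsWithin.2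
    ⟨(closure {x | x ∈ X ∧ f x ∈ C})ᶜ, isClosed_closure.isOpen_compl, hx₀S, ?_⟩)
  rintro x ⟨hxU, hxX⟩
  by_contra hnot
  exact hxU (subset_closure ⟨hxX, fun h' => hnot ⟨h'.1, h'.2⟩⟩)

lemma aux_part2 {m : ℕ} {X : Set (Fin m → F)} {E : Set (Fin m ⊕ Fin m → F)}
    (hE : IsDefEquivOn L X E)
    {K : Set (Fin m → F)} (hKdef : IsDef L K) (hKX : K ⊆ X) (hKclosed : IsClosed K)
    (hq1 : IsDefIdentifying L {v | v ∈ E ∧ v ∘ Sum.inr ∈ K} X (fun v => v ∘ Sum.inl))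
    {n : ℕ} {Y : Set (Fin n → F)} {f : (Fin m → F) → (Fin n → F)}
    (hf : IsDefQuotient L X E Y f) :
    IsDefQuotient L K (E ∩ {v : Fin m ⊕ Fin m → F | v ∘ Sum.inl ∈ K ∧ v ∘ Sum.inr ∈ K}) Y f := by
  obtain ⟨hEdef, hEmem, hErefl, hEsymm, hEtrans⟩ := hE
  obtain ⟨hYdef, hgraph, hcont, hmaps, ⟨hsurj, hident⟩, hfib⟩ := hf
  have hvE : ∀ v : Fin m ⊕ Fin m → F, v ∈ E → f (v ∘ Sum.inl) = f (v ∘ Sum.inr) := by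
    intro v hv
    exact (hfib _ (hEmem v hv).1 _ (hEmem v hv).2).2 (by rwa [Sum.elim_comp_inl_inr])
  refine ⟨hYdef, ?_, hcont.mono hKX, hmaps.mono_left hKX, ⟨?_, ?_⟩, ?_⟩
  · -- graph over K
    show IsDef L _
    have heq : {v : Fin m ⊕ Fin n → F | v ∘ Sum.inl ∈ K ∧ f (v ∘ Sum.inl) = v ∘ Sum.inr}
        = {v | v ∘ Sum.inl ∈ X ∧ f (v ∘ Sum.inl) = v ∘ Sum.inr} ∩ {v | v ∘ Sum.inl ∈ K} := by
      ext v
      exact ⟨fun h => ⟨⟨hKX h.1, h.2⟩, h.1⟩, fun h => ⟨h.2, h.1.2⟩⟩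
    rw [heq]
    exact Set.Definable.inter hgraph (Set.Definable.preimage_comp Sum.inl hKdef)
  · -- surjectivity from K
    intro y hy
    obtain ⟨x, hx, hfx⟩ := hsurj y hy
    obtain ⟨u, ⟨huE, huK⟩, hux⟩ := hq1.1 x hx
    refine ⟨u ∘ Sum.inr, huK, ?_⟩
    have h1 := hvE u huE
    rw [← h1, show u ∘ Sum.inl = x from hux]
    exact hfx
  · -- identifying
    intro C hCdef hCY hclK
    have hSdef : IsDef L {x | x ∈ X ∧ f x ∈ C} := isDef_preimage_fiber hgraph hCdef
    have hAKclosed : IsClosed {x | x ∈ K ∧ f x ∈ C} :=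
      closed_of_closedIn hKclosed (fun x hx => hx.1) hclK
    apply hident C hCdef hCY
    apply hq1.2 _ hSdef (fun x hx => hx.1)
    intro v hv
    obtain ⟨⟨hvE', hvK⟩, hvcl⟩ := hv
    have hsub : {x : Fin m ⊕ Fin m → F |
          x ∈ {v | v ∈ E ∧ v ∘ Sum.inr ∈ K} ∧ (fun v => v ∘ Sum.inl) x ∈ {x | x ∈ X ∧ f x ∈ C}}
        ⊆ (fun v : Fin m ⊕ Fin m → F => v ∘ Sum.inr) ⁻¹' {x | x ∈ K ∧ f x ∈ C} := by
      rintro u ⟨⟨huE, huK⟩, _, hufC⟩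
      exact ⟨huK, (hvE u huE) ▸ hufC⟩
    have hpreclosed : IsClosed
        ((fun v : Fin m ⊕ Fin m → F => v ∘ Sum.inr) ⁻¹' {x | x ∈ K ∧ f x ∈ C}) :=
      hAKclosed.preimage (continuous_pi fun i => continuous_apply _)
    have hvpre := hpreclosed.closure_subset ((closure_mono hsub) hvcl)
    exact ⟨⟨hvE', hvK⟩, (hEmem v hvE').1, (hvE v hvE').symm ▸ hvpre.2⟩
  · -- fibers
    intro x hx x' hx'
    rw [hfib x (hKX hx) x' (hKX hx')]
    constructor
    · intro h
      refine ⟨h, ?_⟩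
      rw [Set.mem_setOf_eq, Sum.elim_comp_inl, Sum.elim_comp_inr]
      exact ⟨hx, hx'⟩
    · exact fun h => h.1

lemma aux_back {m : ℕ} {X : Set (Fin m → F)} {E : Set (Fin m ⊕ Fin m → F)}
    (hlt : IsDef L {v : Fin 2 → F | v 0 < v 1})
    (hXdef : IsDef L X)
    (hE : IsDefEquivOn L X E)
    {K : Set (Fin m → F)} (hKX : K ⊆ X) (hKclosed : IsClosed K)
    (hq1 : IsDefIdentifying L {v | v ∈ E ∧ v ∘ Sum.inr ∈ K} X (fun v => v ∘ Sum.inl))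
    {n : ℕ} {Y : Set (Fin n → F)} {g : (Fin m → F) → (Fin n → F)}
    (hg : IsDefQuotient L K (E ∩ {v : Fin m ⊕ Fin m → F | v ∘ Sum.inl ∈ K ∧ v ∘ Sum.inr ∈ K}) Y g) :
    ∃ f : (Fin m → F) → (Fin n → F), IsDefQuotient L X E Y f := by
  classical
  obtain ⟨hEdef, hEmem, hErefl, hEsymm, hEtrans⟩ := hE
  obtain ⟨hYdef, hGg, hgcont, hgmaps, ⟨hgsurj, hgident⟩, hgfib⟩ := hg
  set f : (Fin m → F) → (Fin n → F) := fun x =>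
    if h : ∃ k, k ∈ K ∧ Sum.elim x k ∈ E then g h.choose else g x with hfdef
  have hPX : ∀ x ∈ X, ∃ k, k ∈ K ∧ Sum.elim x k ∈ E := by
    intro x hx
    obtain ⟨u, ⟨huE, huK⟩, hux⟩ := hq1.1 x hx
    refine ⟨u ∘ Sum.inr, huK, ?_⟩
    have h2 : Sum.elim x (u ∘ Sum.inr) = u := by
      rw [← show u ∘ Sum.inl = x from hux]
      exact Sum.elim_comp_inl_inr u
    rwa [h2]
  have hfval : ∀ x ∈ X, ∀ k ∈ K, Sum.elim x k ∈ E → f x = g k := by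
    intro x hx k hk hxk
    have h : ∃ k, k ∈ K ∧ Sum.elim x k ∈ E := ⟨k, hk, hxk⟩
    have h1 : Sum.elim h.choose k ∈ E :=
      hEtrans _ _ _ (hEsymm _ _ h.choose_spec.2) hxk
    have h3 : g h.choose = g k := by
      refine (hgfib _ h.choose_spec.1 _ hk).2 ⟨h1, ?_⟩
      rw [Set.mem_setOf_eq, Sum.elim_comp_inl, Sum.elim_comp_inr]
      exact ⟨h.choose_spec.1, hk⟩
    rw [hfdef]
    dsimp only
    rw [dif_pos h]
    exact h3
  have hfK : ∀ k ∈ K, f k = g k := fun k hk => hfval k (hKX hk) k hk (hErefl k (hKX hk))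
  -- graph of f is definable
  have hgraphf : IsDefFunOn L X f := by
    show IsDef L _
    have heq : {v : Fin m ⊕ Fin n → F | v ∘ Sum.inl ∈ X ∧ f (v ∘ Sum.inl) = v ∘ Sum.inr}
        = {v : Fin m ⊕ Fin n → F | v ∘ Sum.inl ∈ X}
          ∩ ((fun w : ((Fin m ⊕ Fin n) ⊕ Fin m) → F => w ∘ Sum.inl) ''
            ({w : ((Fin m ⊕ Fin n) ⊕ Fin m) → F |
                w ∘ (Sum.elim (Sum.inl ∘ Sum.inl) Sum.inr : Fin m ⊕ Fin m → _) ∈ E}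
              ∩ {w : ((Fin m ⊕ Fin n) ⊕ Fin m) → F |
                w ∘ (Sum.elim Sum.inr (Sum.inl ∘ Sum.inr) : Fin m ⊕ Fin n → _) ∈
                  {v : Fin m ⊕ Fin n → F | v ∘ Sum.inl ∈ K ∧ g (v ∘ Sum.inl) = v ∘ Sum.inr}})) := by
      ext v
      simp only [Set.mem_inter_iff, Set.mem_setOf_eq, Set.mem_image]
      constructor
      · rintro ⟨hvX, hvf⟩
        obtain ⟨k, hkK, hxk⟩ := hPX _ hvX
        refine ⟨hvX, Sum.elim v k, ⟨?_, ?_⟩, Sum.elim_comp_inl v k⟩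
        · have h2 : Sum.elim v k ∘ (Sum.elim (Sum.inl ∘ Sum.inl) Sum.inr : Fin m ⊕ Fin m → _)
              = Sum.elim (v ∘ Sum.inl) k := funext fun t => by cases t <;> rfl
          rw [h2]
          exact hxk
        · have h2 : Sum.elim v k ∘ (Sum.elim Sum.inr (Sum.inl ∘ Sum.inr) : Fin m ⊕ Fin n → _)
              = Sum.elim k (v ∘ Sum.inr) := funext fun t => by cases t <;> rfl
          rw [h2]
          show Sum.elim k (v ∘ Sum.inr) ∘ Sum.inl ∈ K ∧ _
          rw [Sum.elim_comp_inl, Sum.elim_comp_inr]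
          exact ⟨hkK, by rw [← hvf]; exact (hfval _ hvX k hkK hxk).symm⟩
      · rintro ⟨hvX, w, ⟨hwE, hwG⟩, hwv⟩
        refine ⟨hvX, ?_⟩
        have hc1 : w ∘ (Sum.elim (Sum.inl ∘ Sum.inl) Sum.inr : Fin m ⊕ Fin m → _)
            = Sum.elim (v ∘ Sum.inl) (w ∘ Sum.inr) := by
          funext t
          cases t with
          | inl j =>
            show w (Sum.inl (Sum.inl j)) = v (Sum.inl j)
            rw [← show w ∘ Sum.inl = v from hwv]
            rfl
          | inr j => rfl
        have hd1 : w ∘ (Sum.elim Sum.inr (Sum.inl ∘ Sum.inr) : Fin m ⊕ Fin n → _)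
            = Sum.elim (w ∘ Sum.inr) (v ∘ Sum.inr) := by
          funext t
          cases t with
          | inl j => rfl
          | inr j =>
            show w (Sum.inl (Sum.inr j)) = v (Sum.inr j)
            rw [← show w ∘ Sum.inl = v from hwv]
            rfl
        rw [hc1] at hwE
        rw [hd1] at hwG
        rw [Sum.elim_comp_inl, Sum.elim_comp_inr] at hwG
        rw [hfval _ hvX (w ∘ Sum.inr) hwG.1 hwE, hwG.2]
    rw [heq]
    exact Set.Definable.inter (Set.Definable.preimage_comp Sum.inl hXdef)
      (Set.Definable.image_comp
        (Set.Definable.inter (Set.Definable.preimage_comp _ hEdef)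
          (Set.Definable.preimage_comp _ hGg)) Sum.inl)
  -- continuity of f
  have hAKclosed : ∀ C : Set (Fin n → F), IsClosed C → IsClosed {k | k ∈ K ∧ g k ∈ C} := by
    intro C hC
    exact hgcont.preimage_isClosed_of_isClosed hKclosed hC
  have hcontf : ContinuousOn f X := by
    apply continuousOn_criterion hlt
    intro C hCdef hCclosed
    have hSdef : IsDef L {x | x ∈ X ∧ f x ∈ C} := isDef_preimage_fiber hgraphf hCdef
    apply hq1.2 _ hSdef (fun x hx => hx.1)
    intro v hv
    obtain ⟨⟨hvE', hvK⟩, hvcl⟩ := hv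
    have hvfval : ∀ u : Fin m ⊕ Fin m → F, u ∈ E → u ∘ Sum.inr ∈ K →
        f (u ∘ Sum.inl) = g (u ∘ Sum.inr) := by
      intro u huE huK
      exact hfval (u ∘ Sum.inl) (hEmem u huE).1 (u ∘ Sum.inr) huK
        (by rwa [Sum.elim_comp_inl_inr])
    have hsub : {x : Fin m ⊕ Fin m → F |
          x ∈ {v | v ∈ E ∧ v ∘ Sum.inr ∈ K} ∧ (fun v => v ∘ Sum.inl) x ∈ {x | x ∈ X ∧ f x ∈ C}}
        ⊆ (fun v : Fin m ⊕ Fin m → F => v ∘ Sum.inr) ⁻¹' {k | k ∈ K ∧ g k ∈ C} := by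
      rintro u ⟨⟨huE, huK⟩, _, hufC⟩
      exact ⟨huK, (hvfval u huE huK) ▸ hufC⟩
    have hpreclosed : IsClosed
        ((fun v : Fin m ⊕ Fin m → F => v ∘ Sum.inr) ⁻¹' {k | k ∈ K ∧ g k ∈ C}) :=
      (hAKclosed C hCclosed).preimage (continuous_pi fun i => continuous_apply _)
    have hvpre := hpreclosed.closure_subset ((closure_mono hsub) hvcl)
    exact ⟨⟨hvE', hvK⟩, (hEmem v hvE').1, (hvfval v hvE' hvK).symm ▸ hvpre.2⟩
  have hmapsf : MapsTo f X Y := by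
    intro x hx
    obtain ⟨k, hk, hxk⟩ := hPX x hx
    rw [hfval x hx k hk hxk]
    exact hgmaps hk
  refine ⟨f, hYdef, hgraphf, hcontf, hmapsf, ⟨?_, ?_⟩, ?_⟩
  · intro y hy
    obtain ⟨k, hkK, hgk⟩ := hgsurj y hy
    exact ⟨k, hKX hkK, by rw [hfK k hkK]; exact hgk⟩
  · intro C hCdef hCY hcl
    apply hgident C hCdef hCY
    have hKset : {x | x ∈ K ∧ g x ∈ C} = {x | x ∈ K ∧ f x ∈ C} := by
      ext x
      exact ⟨fun h => ⟨h.1, by rw [hfK x h.1]; exact h.2⟩,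
        fun h => ⟨h.1, by rw [← hfK x h.1]; exact h.2⟩⟩
    rw [ClosedIn, hKset]
    rintro k ⟨hkK, hkcl⟩
    have hsub2 : {x | x ∈ K ∧ f x ∈ C} ⊆ {x | x ∈ X ∧ f x ∈ C} :=
      fun x hx => ⟨hKX hx.1, hx.2⟩
    exact ⟨hkK, (hcl ⟨hKX hkK, (closure_mono hsub2) hkcl⟩).2⟩
  · intro x hx x' hx'
    obtain ⟨k, hk, hxk⟩ := hPX x hx
    obtain ⟨k', hk', hxk'⟩ := hPX x' hx'
    rw [hfval x hx k hk hxk, hfval x' hx' k' hk' hxk', hgfib k hk k' hk']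
    constructor
    · rintro ⟨hE', -⟩
      exact hEtrans _ _ _ hxk (hEtrans _ _ _ hE' (hEsymm _ _ hxk'))
    · intro hxx'
      refine ⟨hEtrans _ _ _ (hEsymm _ _ hxk) (hEtrans _ _ _ hxx' hxk'), ?_⟩
      rw [Set.mem_setOf_eq, Sum.elim_comp_inl, Sum.elim_comp_inr]
      exact ⟨hk, hk'⟩

end Aux

/-- reduction of definable quotients to a definable closed subset K when
the restriction of the first projection to p₂⁻¹(K) is definably identifying. -/
theorem statement_7
    {F : Type*} [Field F] [LinearOrder F] [IsStrictOrderedRing F] [TopologicalSpace F] [OrderTopology F]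
    (L : FirstOrder.Language) [L.Structure F]
    (hfield : IsOrderedFieldExpansion (F := F) L)
    (hdc : DefinablyComplete (F := F) L)
    (hlo : LocallyOMinimal (F := F) L)
    {m : ℕ} (X : Set (Fin m → F)) (E : Set (Fin m ⊕ Fin m → F))
    (hXdef : IsDef L X) (hXclosed : IsClosed X)
    (hE : IsDefEquivOn L X E)
    (hEclosed : ClosedIn {v : Fin m ⊕ Fin m → F | v ∘ Sum.inl ∈ X ∧ v ∘ Sum.inr ∈ X} E)
    (K : Set (Fin m → F)) (hKdef : IsDef L K) (hKX : K ⊆ X) (hKclosed : IsClosed K)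
    (hq1 : IsDefIdentifying L {v | v ∈ E ∧ v ∘ Sum.inr ∈ K} X (fun v => v ∘ Sum.inl)) :
    ((∃ (n : ℕ) (Y : Set (Fin n → F)) (f : (Fin m → F) → (Fin n → F)),
        IsDefQuotient L X E Y f) ↔
      (∃ (n : ℕ) (Y : Set (Fin n → F)) (f : (Fin m → F) → (Fin n → F)),
        IsDefQuotient L K
          (E ∩ {v : Fin m ⊕ Fin m → F | v ∘ Sum.inl ∈ K ∧ v ∘ Sum.inr ∈ K}) Y f)) ∧
    ∀ (n : ℕ) (Y : Set (Fin n → F)) (f : (Fin m → F) → (Fin n → F)),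
      IsDefQuotient L X E Y f →
      IsDefQuotient L K
        (E ∩ {v : Fin m ⊕ Fin m → F | v ∘ Sum.inl ∈ K ∧ v ∘ Sum.inr ∈ K}) Y f := by
  have part2 := fun (n : ℕ) (Y : Set (Fin n → F)) (f : (Fin m → F) → (Fin n → F)) hf =>
    aux_part2 hE hKdef hKX hKclosed hq1 (n := n) (Y := Y) (f := f) hf
  refine ⟨⟨?_, ?_⟩, part2⟩
  · rintro ⟨n, Y, f, hf⟩
    exact ⟨n, Y, f, part2 n Y f hf⟩
  · rintro ⟨n, Y, g, hg⟩
    obtain ⟨f, hf⟩ := aux_back hfield.1 hXdef hE hKX hKclosed hq1 hg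
    exact ⟨n, Y, f, hf⟩
end

section
/- Consider a definably complete locally o-minimal expansion 𝓕 = (F, <, +, ·, 0, 1, …) of an ordered field. Let X be a definable set and E ⊆ X × X a definable equivalence relation on X which is definably proper over X, and let p₁, p₂ : E → X be the restrictions to E of the two projections X × X → X. Let γ : (0,ε) → E be a definable curve and set α = p₁ ∘ γ, β = p₂ ∘ γ. If either α or β is completable in X, then both are completable in X; moreover, in that case, if α → p and β → q, then γ → (p,q). -/
open FirstOrder Set Topology Filter

section Tools

open FirstOrder.Language

variable {F : Type*} {L : FirstOrder.Language} [L.Structure F]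

lemma isDef_relabel {α β : Type} {s : Set (α → F)} (h : IsDef L s) (f : α → β) :
    IsDef L {v : β → F | v ∘ f ∈ s} :=
  Set.Definable.preimage_comp f h

lemma isDef_proj {β ι : Type} [Finite β] [Finite ι] {s : Set (β ⊕ ι → F)} (h : IsDef L s) :
    IsDef L {w : β → F | ∃ z : ι → F, Sum.elim w z ∈ s} := by
  have h2 := Set.Definable.image_comp h Sum.inl
  have : ((fun g : β ⊕ ι → F => g ∘ Sum.inl) '' s) = {w : β → F | ∃ z : ι → F, Sum.elim w z ∈ s} := by
    ext w
    constructor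
    · rintro ⟨v, hv, rfl⟩
      exact ⟨v ∘ Sum.inr, by rwa [Sum.elim_comp_inl_inr]⟩
    · rintro ⟨z, hz⟩
      exact ⟨Sum.elim w z, hz, Sum.elim_comp_inl _ _⟩
  rwa [this] at h2

lemma isDef_iInter {κ : Type} {ι' : Type*} [Fintype ι'] {s : ι' → Set (κ → F)}
    (h : ∀ i, IsDef L (s i)) : IsDef L (⋂ i, s i) := by
  have := Set.definable_biInter_finset (A := (Set.univ : Set F)) h Finset.univ
  simpa [IsDef] using this

lemma isDef_eqq {κ : Type} (i j : κ) : IsDef L {v : κ → F | v i = v j} := by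
  refine ⟨FirstOrder.Language.Term.equal (FirstOrder.Language.Term.var i)
    (FirstOrder.Language.Term.var j), ?_⟩
  ext v
  simp [FirstOrder.Language.Term.equal, FirstOrder.Language.Formula.Realize]

lemma isDef_eqC {κ : Type} (i : κ) (c : F) : IsDef L {v : κ → F | v i = c} := by
  refine ⟨FirstOrder.Language.Term.equal (FirstOrder.Language.Term.var i)
    ((L.con ⟨c, Set.mem_univ c⟩).term), ?_⟩
  ext v
  simp [FirstOrder.Language.Term.equal, FirstOrder.Language.Formula.Realize,
    FirstOrder.Language.funMap_eq_coe_constants, FirstOrder.Language.coe_con]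

end Tools
section Tools2

variable {F : Type*} [Field F] [LinearOrder F] [IsStrictOrderedRing F] {L : FirstOrder.Language} [L.Structure F]

lemma isDef_ltc {κ : Type} (hlt : IsDef L {v : Fin 2 → F | v 0 < v 1}) (i j : κ) :
    IsDef L {v : κ → F | v i < v j} := by
  have h := isDef_relabel hlt (![i, j])
  have e : {v : κ → F | v ∘ ![i, j] ∈ {w : Fin 2 → F | w 0 < w 1}} = {v : κ → F | v i < v j} := by
    ext v; simp [Function.comp]
  rwa [e] at h

lemma isDef_plusc {κ : Type} (hplus : IsDef L {v : Fin 3 → F | v 0 + v 1 = v 2}) (i j k : κ) :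
    IsDef L {v : κ → F | v i + v j = v k} := by
  have h := isDef_relabel hplus (![i, j, k])
  have e : {v : κ → F | v ∘ ![i, j, k] ∈ {w : Fin 3 → F | w 0 + w 1 = w 2}} =
      {v : κ → F | v i + v j = v k} := by
    ext v; simp [Function.comp]
  rwa [e] at h

lemma isDef_ltC {κ : Type} (hlt : IsDef L {v : Fin 2 → F | v 0 < v 1}) (i : κ) (c : F) :
    IsDef L {v : κ → F | v i < c} := by
  have hS := Set.Definable.inter (isDef_ltc hlt (Sum.inl (0 : Fin 1)) (Sum.inr (0 : Fin 1)))
    (isDef_eqC (Sum.inr (0 : Fin 1)) c)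
  have hP := isDef_proj hS
  have e : {w : Fin 1 → F | ∃ z : Fin 1 → F,
      Sum.elim w z ∈ {u : Fin 1 ⊕ Fin 1 → F | u (Sum.inl 0) < u (Sum.inr 0)} ∩
        {u | u (Sum.inr 0) = c}} = {w : Fin 1 → F | w 0 < c} := by
    ext w
    constructor
    · rintro ⟨z, h1, h2⟩
      simp only [Set.mem_setOf_eq, Sum.elim_inl, Sum.elim_inr] at h1 h2
      simpa [h2] using h1
    · intro hw
      exact ⟨fun _ => c, by simpa using hw, by simp⟩
  rw [e] at hP
  have h := isDef_relabel hP (fun _ : Fin 1 => i)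
  have e2 : {v : κ → F | v ∘ (fun _ : Fin 1 => i) ∈ {w : Fin 1 → F | w 0 < c}} =
      {v : κ → F | v i < c} := by ext v; simp [Function.comp]
  rwa [e2] at h

lemma isDef_Clt {κ : Type} (hlt : IsDef L {v : Fin 2 → F | v 0 < v 1}) (c : F) (i : κ) :
    IsDef L {v : κ → F | c < v i} := by
  have hS := Set.Definable.inter (isDef_ltc hlt (Sum.inr (0 : Fin 1)) (Sum.inl (0 : Fin 1)))
    (isDef_eqC (Sum.inr (0 : Fin 1)) c)
  have hP := isDef_proj hS
  have e : {w : Fin 1 → F | ∃ z : Fin 1 → F,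
      Sum.elim w z ∈ {u : Fin 1 ⊕ Fin 1 → F | u (Sum.inr 0) < u (Sum.inl 0)} ∩
        {u | u (Sum.inr 0) = c}} = {w : Fin 1 → F | c < w 0} := by
    ext w
    constructor
    · rintro ⟨z, h1, h2⟩
      simp only [Set.mem_setOf_eq, Sum.elim_inl, Sum.elim_inr] at h1 h2
      simpa [h2] using h1
    · intro hw
      exact ⟨fun _ => c, by simpa using hw, by simp⟩
  rw [e] at hP
  have h := isDef_relabel hP (fun _ : Fin 1 => i)
  have e2 : {v : κ → F | v ∘ (fun _ : Fin 1 => i) ∈ {w : Fin 1 → F | c < w 0}} =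
      {v : κ → F | c < v i} := by ext v; simp [Function.comp]
  rwa [e2] at h

lemma isDef_ltAddC {κ : Type} (hlt : IsDef L {v : Fin 2 → F | v 0 < v 1})
    (hplus : IsDef L {v : Fin 3 → F | v 0 + v 1 = v 2}) (c : F) (i j : κ) :
    IsDef L {v : κ → F | v i < c + v j} := by
  have hS := (Set.Definable.inter (isDef_eqC (L := L) (κ := Fin 2 ⊕ Fin 2) (Sum.inr 0) c)
      (isDef_plusc hplus (Sum.inr 0) (Sum.inl 1) (Sum.inr 1))).inter
      (isDef_ltc hlt (Sum.inl 0) (Sum.inr 1))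
  have hP := isDef_proj hS
  have e : {w : Fin 2 → F | ∃ z : Fin 2 → F, Sum.elim w z ∈
      ({u : Fin 2 ⊕ Fin 2 → F | u (Sum.inr 0) = c} ∩
        {u | u (Sum.inr 0) + u (Sum.inl 1) = u (Sum.inr 1)}) ∩
        {u | u (Sum.inl 0) < u (Sum.inr 1)}} = {w : Fin 2 → F | w 0 < c + w 1} := by
    ext w
    constructor
    · rintro ⟨z, ⟨h1, h2⟩, h3⟩
      simp only [Set.mem_setOf_eq, Sum.elim_inl, Sum.elim_inr] at h1 h2 h3
      rw [h1] at h2; rw [← h2] at h3; exact h3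
    · intro hw
      refine ⟨![c, c + w 1], ⟨by simp, by simp⟩, by simpa using hw⟩
  rw [e] at hP
  have h := isDef_relabel hP (![i, j])
  have e2 : {v : κ → F | v ∘ ![i, j] ∈ {w : Fin 2 → F | w 0 < c + w 1}} =
      {v : κ → F | v i < c + v j} := by ext v; simp [Function.comp]
  rwa [e2] at h

lemma isDef_CltAdd {κ : Type} (hlt : IsDef L {v : Fin 2 → F | v 0 < v 1})
    (hplus : IsDef L {v : Fin 3 → F | v 0 + v 1 = v 2}) (c : F) (i j : κ) :
    IsDef L {v : κ → F | c < v i + v j} := by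
  have hS := (isDef_plusc (L := L) hplus (Sum.inl (0 : Fin 2)) (Sum.inl (1 : Fin 2))
      (Sum.inr (0 : Fin 1))).inter (isDef_Clt hlt c (Sum.inr (0 : Fin 1)))
  have hP := isDef_proj hS
  have e : {w : Fin 2 → F | ∃ z : Fin 1 → F, Sum.elim w z ∈
      ({u : Fin 2 ⊕ Fin 1 → F | u (Sum.inl 0) + u (Sum.inl 1) = u (Sum.inr 0)} ∩
        {u | c < u (Sum.inr 0)})} = {w : Fin 2 → F | c < w 0 + w 1} := by
    ext w
    constructor
    · rintro ⟨z, h1, h2⟩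
      simp only [Set.mem_setOf_eq, Sum.elim_inl, Sum.elim_inr] at h1 h2
      rwa [← h1] at h2
    · intro hw
      exact ⟨fun _ => w 0 + w 1, by simp, by simpa using hw⟩
  rw [e] at hP
  have h := isDef_relabel hP (![i, j])
  have e2 : {v : κ → F | v ∘ ![i, j] ∈ {w : Fin 2 → F | c < w 0 + w 1}} =
      {v : κ → F | c < v i + v j} := by ext v; simp [Function.comp]
  rwa [e2] at h

lemma isDef_absLt {κ : Type} (hlt : IsDef L {v : Fin 2 → F | v 0 < v 1})
    (hplus : IsDef L {v : Fin 3 → F | v 0 + v 1 = v 2}) (c : F) (i j : κ) :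
    IsDef L {v : κ → F | |v i - c| < v j} := by
  have h := (isDef_ltAddC hlt hplus c i j).inter (isDef_CltAdd hlt hplus c i j)
  have e : {v : κ → F | v i < c + v j} ∩ {v : κ → F | c < v i + v j} =
      {v : κ → F | |v i - c| < v j} := by
    ext v
    simp only [Set.mem_inter_iff, Set.mem_setOf_eq, abs_sub_lt_iff]
    constructor
    · rintro ⟨h1, h2⟩; constructor <;> linarith
    · rintro ⟨h1, h2⟩; constructor <;> linarith
  rwa [e] at h

end Tools2
section Tools3

variable {F : Type*} [Field F] [LinearOrder F] [IsStrictOrderedRing F] [TopologicalSpace F] [OrderTopology F]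
  {L : FirstOrder.Language} [L.Structure F]

lemma exists_forall_of_eventually {ε : F} {Q : F → Prop}
    (h : ∀ᶠ t in nhdsWithin 0 (Set.Ioo 0 ε), Q t) :
    ∃ θ > 0, ∀ t ∈ Set.Ioo 0 ε, t < θ → Q t := by
  rw [Filter.eventually_iff, mem_nhdsWithin] at h
  obtain ⟨U, hUo, hU0, hsub⟩ := h
  obtain ⟨l, u, hlu, hsubU⟩ := (mem_nhds_iff_exists_Ioo_subset).1 (hUo.mem_nhds hU0)
  exact ⟨u, hlu.2, fun t ht htu => hsub ⟨hsubU ⟨lt_trans hlu.1 ht.1, htu⟩, ht⟩⟩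

lemma eventually_lt_of_pos {ε d : F} (hd : 0 < d) :
    ∀ᶠ t in nhdsWithin 0 (Set.Ioo 0 ε), t < d := by
  filter_upwards [mem_nhdsWithin_of_mem_nhds (Ioo_mem_nhds (neg_lt_zero.2 hd) hd)] with t ht
  exact ht.2

lemma nhdsWithin_Ioo_zero_neBot {ε : F} (hε : 0 < ε) :
    (nhdsWithin (0 : F) (Set.Ioo 0 ε)).NeBot := by
  refine mem_closure_iff_nhdsWithin_neBot.1 ?_
  rw [closure_Ioo hε.ne]
  exact ⟨le_refl 0, hε.le⟩

lemma isOpen_box {α : Type} [Finite α] (x : α → F) (r : F) :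
    IsOpen {y : α → F | ∀ i, |y i - x i| < r} := by
  have e : {y : α → F | ∀ i, |y i - x i| < r} =
      ⋂ i, (fun y : α → F => y i) ⁻¹' (Set.Ioo (x i - r) (x i + r)) := by
    refine Set.ext fun y => ?_
    simp only [Set.mem_iInter, Set.mem_preimage, Set.mem_Ioo, Set.mem_setOf_eq, abs_sub_lt_iff]
    refine forall_congr' fun i => ?_
    constructor
    · rintro ⟨h1, h2⟩; constructor <;> linarith
    · rintro ⟨h1, h2⟩; constructor <;> linarith
  rw [e]
  exact isOpen_iInter_of_finite fun i => (isOpen_Ioo).preimage (continuous_apply i)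

lemma dichotomy (hlo : LocallyOMinimal (F := F) L) (s : Set F)
    (hs : IsDef L {v : Fin 1 → F | v 0 ∈ s}) :
    ∃ η > 0, (Set.Ioo 0 η ⊆ s) ∨ (∀ t ∈ Set.Ioo (0 : F) η, t ∉ s) := by
  classical
  obtain ⟨b, c, hb, hc, P, I, hPI⟩ := hlo s hs 0
  set Q : Finset F :=
    insert c ((P ∪ I.image Prod.fst ∪ I.image Prod.snd).filter (fun x => 0 < x)) with hQ
  have hQne : Q.Nonempty := ⟨c, Finset.mem_insert_self _ _⟩
  set η := Q.min' hQne with hη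
  have hηpos : 0 < η := by
    have hmem : η ∈ Q := Q.min'_mem hQne
    rcases Finset.mem_insert.1 hmem with h | h
    · rw [h]; exact hc
    · exact (Finset.mem_filter.1 h).2
  have hηc : η ≤ c := Finset.min'_le _ _ (Finset.mem_insert_self _ _)
  by_cases hcase : ∃ q ∈ I, q.1 ≤ 0 ∧ 0 < q.2
  · obtain ⟨q, hqI, hq1, hq2⟩ := hcase
    refine ⟨η, hηpos, Or.inl ?_⟩
    have hηq2 : η ≤ q.2 := Finset.min'_le _ _ (Finset.mem_insert_of_mem (Finset.mem_filter.2
      ⟨Finset.mem_union_right _ (Finset.mem_image_of_mem _ hqI), hq2⟩))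
    intro t ht
    have htIoo : t ∈ Set.Ioo q.1 q.2 := ⟨lt_of_le_of_lt hq1 ht.1, lt_of_lt_of_le ht.2 hηq2⟩
    have hmem : t ∈ s ∩ Set.Ioo b c := by
      rw [hPI]
      exact Or.inr (Set.mem_biUnion hqI htIoo)
    exact hmem.1
  · refine ⟨η, hηpos, Or.inr ?_⟩
    intro t ht hts
    have htbc : t ∈ Set.Ioo b c := ⟨lt_trans hb ht.1, lt_of_lt_of_le ht.2 hηc⟩
    have hmem : t ∈ (↑P : Set F) ∪ ⋃ p ∈ I, Set.Ioo p.1 p.2 := by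
      rw [← hPI]; exact ⟨hts, htbc⟩
    rcases hmem with hP' | hI'
    · have hle : η ≤ t := Finset.min'_le _ _ (Finset.mem_insert_of_mem (Finset.mem_filter.2
        ⟨Finset.mem_union_left _ (Finset.mem_union_left _ hP'), ht.1⟩))
      exact absurd ht.2 (not_lt.2 hle)
    · obtain ⟨q, hqI, htq⟩ := Set.mem_iUnion₂.1 hI'
      have hq1pos : 0 < q.1 := by
        by_contra hq1; push_neg at hq1
        exact hcase ⟨q, hqI, hq1, lt_trans ht.1 htq.2⟩
      have hle : η ≤ q.1 := Finset.min'_le _ _ (Finset.mem_insert_of_mem (Finset.mem_filter.2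
        ⟨Finset.mem_union_left _ (Finset.mem_union_right _ (Finset.mem_image_of_mem _ hqI)),
          hq1pos⟩))
      exact absurd (lt_trans htq.1 ht.2) (not_lt.2 hle)

lemma limit_exists (hdc : DefinablyComplete (F := F) L) (hlo : LocallyOMinimal (F := F) L)
    {ε : F} (f : F → F)
    (hUdef : IsDef L {v : Fin 1 → F |
      v 0 ∈ {c : F | ∃ d, 0 < d ∧ ∀ t, t ∈ Set.Ioo 0 ε → t < d → f t ≤ c}})
    (hsdef : ∀ b : F, IsDef L {v : Fin 1 → F | v 0 ∈ {t : F | t ∈ Set.Ioo 0 ε ∧ f t ≤ b}})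
    {a b δ' : F} (hδ' : 0 < δ') (hε : 0 < ε)
    (hbd : ∀ t ∈ Set.Ioo 0 ε, t < δ' → a ≤ f t ∧ f t ≤ b) :
    ∃ l, Filter.Tendsto f (nhdsWithin 0 (Set.Ioo 0 ε)) (nhds l) := by
  set U := {c : F | ∃ d, 0 < d ∧ ∀ t, t ∈ Set.Ioo 0 ε → t < d → f t ≤ c} with hU
  have hUne : U.Nonempty := ⟨b, δ', hδ', fun t ht htd => (hbd t ht htd).2⟩
  have tpick : ∀ d : F, 0 < d → ∃ t, t ∈ Set.Ioo 0 ε ∧ t < d ∧ t < δ' := by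
    intro d hd
    have h1 : 0 < min (min d δ') ε := lt_min (lt_min hd hδ') hε
    have h2 : min (min d δ') ε / 2 < min (min d δ') ε := half_lt_self h1
    exact ⟨_, ⟨half_pos h1, lt_of_lt_of_le h2 (min_le_right _ _)⟩,
      lt_of_lt_of_le h2 (le_trans (min_le_left _ _) (min_le_left _ _)),
      lt_of_lt_of_le h2 (le_trans (min_le_left _ _) (min_le_right _ _))⟩
  have hUbb : BddBelow U := by
    refine ⟨a, fun c hc => ?_⟩
    obtain ⟨d, hd, hall⟩ := hc
    obtain ⟨t, ht, htd, htδ'⟩ := tpick d hd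
    exact le_trans (hbd t ht htδ').1 (hall t ht htd)
  obtain ⟨l, hl⟩ := (hdc U hUdef hUne).2 hUbb
  refine ⟨l, ?_⟩
  rw [tendsto_order]
  constructor
  · intro b' hb'
    obtain ⟨η, hη, hcase⟩ := dichotomy hlo {t : F | t ∈ Set.Ioo 0 ε ∧ f t ≤ b'} (hsdef b')
    rcases hcase with hsub | hdisj
    · exfalso
      have hbU : b' ∈ U := ⟨η, hη, fun t ht htd => (hsub ⟨ht.1, htd⟩).2⟩
      exact absurd hb' (not_lt.2 (hl.1 hbU))
    · filter_upwards [eventually_lt_of_pos hη, self_mem_nhdsWithin] with t h1 h2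
      by_contra hft; push_neg at hft
      exact hdisj t ⟨h2.1, h1⟩ ⟨h2, hft⟩
  · intro b' hb'
    have hex : ∃ u ∈ U, u < b' := by
      by_contra hno; push_neg at hno
      exact absurd hb' (not_lt.2 (hl.2 fun u hu => hno u hu))
    obtain ⟨u, ⟨d, hd, hall⟩, hub'⟩ := hex
    filter_upwards [eventually_lt_of_pos hd, self_mem_nhdsWithin] with t h1 h2
    exact lt_of_le_of_lt (hall t h2 h1) hub'

end Tools3
section Tools4

variable {F : Type*} [Field F] [LinearOrder F] [IsStrictOrderedRing F] {L : FirstOrder.Language} [L.Structure F]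
  {m : ℕ} {ε : F} {γ : F → (Fin m ⊕ Fin m → F)}

/-- The graph set of the curve, as in `IsDefCurve`. -/
def GammaSet (ε : F) (γ : F → (Fin m ⊕ Fin m → F)) :
    Set ((Unit ⊕ (Fin m ⊕ Fin m)) → F) :=
  {v | v (Sum.inl ()) ∈ Set.Ioo 0 ε ∧ γ (v (Sum.inl ())) = v ∘ Sum.inr}

lemma defK (hΓ : IsDef L (GammaSet ε γ)) (hlt : IsDef L {v : Fin 2 → F | v 0 < v 1})
    (δ : F) (p : Fin m → F) :
    IsDef L {x : Fin m → F |
      (∃ t, t ∈ Set.Ioo 0 ε ∧ t ≤ δ ∧ γ t ∘ Sum.inl = x) ∨ x = p} := by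
  classical
  have hSdef : IsDef L
      (({v : (Fin m ⊕ (Unit ⊕ (Fin m ⊕ Fin m))) → F | v ∘ Sum.inr ∈ GammaSet ε γ} ∩
        {v | δ < v (Sum.inr (Sum.inl ()))}ᶜ) ∩
        (⋂ i : Fin m, {v | v (Sum.inl i) = v (Sum.inr (Sum.inr (Sum.inl i)))})) :=
    ((isDef_relabel hΓ Sum.inr).inter (isDef_Clt hlt δ (Sum.inr (Sum.inl ()))).compl).inter
      (isDef_iInter fun i => isDef_eqq (Sum.inl i) (Sum.inr (Sum.inr (Sum.inl i))))
  have hP := isDef_proj hSdef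
  have hsing : IsDef L (⋂ i : Fin m, {x : Fin m → F | x i = p i}) :=
    isDef_iInter fun i => isDef_eqC i (p i)
  have hU := hP.union hsing
  have e : {w : Fin m → F | ∃ z : Unit ⊕ (Fin m ⊕ Fin m) → F, Sum.elim w z ∈
      ({v : (Fin m ⊕ (Unit ⊕ (Fin m ⊕ Fin m))) → F | v ∘ Sum.inr ∈ GammaSet ε γ} ∩
        {v | δ < v (Sum.inr (Sum.inl ()))}ᶜ) ∩
        (⋂ i : Fin m, {v | v (Sum.inl i) = v (Sum.inr (Sum.inr (Sum.inl i)))})} ∪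
      (⋂ i : Fin m, {x : Fin m → F | x i = p i}) =
      {x : Fin m → F | (∃ t, t ∈ Set.Ioo 0 ε ∧ t ≤ δ ∧ γ t ∘ Sum.inl = x) ∨ x = p} := by
    ext x
    constructor
    · rintro (⟨z, ⟨h1, h2⟩, h3⟩ | hx)
      · rw [Set.mem_setOf_eq, Sum.elim_comp_inr] at h1
        simp only [Set.mem_compl_iff, Set.mem_setOf_eq, Sum.elim_inr] at h2
        simp only [Set.mem_iInter, Set.mem_setOf_eq, Sum.elim_inl, Sum.elim_inr] at h3
        obtain ⟨ht, hgr⟩ := h1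
        refine Or.inl ⟨z (Sum.inl ()), ht, not_lt.1 h2, funext fun i => ?_⟩
        rw [Function.comp_apply, hgr]
        exact (h3 i).symm
      · refine Or.inr (funext fun i => ?_)
        exact Set.mem_iInter.1 hx i
    · rintro (⟨t, htI, htδ, heq⟩ | rfl)
      · refine Or.inl ⟨Sum.elim (fun _ => t) (γ t), ⟨?_, ?_⟩, ?_⟩
        · rw [Set.mem_setOf_eq, Sum.elim_comp_inr]
          exact ⟨htI, by rw [Sum.elim_comp_inr, Sum.elim_inl]⟩
        · simp only [Set.mem_compl_iff, Set.mem_setOf_eq, Sum.elim_inr, Sum.elim_inl]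
          exact not_lt.2 htδ
        · simp only [Set.mem_iInter, Set.mem_setOf_eq, Sum.elim_inl, Sum.elim_inr]
          intro i
          rw [← heq]
          rfl
      · exact Or.inr (Set.mem_iInter.2 fun i => rfl)
  rwa [e] at hU

lemma defU (hΓ : IsDef L (GammaSet ε γ)) (hlt : IsDef L {v : Fin 2 → F | v 0 < v 1})
    (j : Fin m ⊕ Fin m) :
    IsDef L {v : Fin 1 → F |
      v 0 ∈ {c : F | ∃ d, 0 < d ∧ ∀ t, t ∈ Set.Ioo 0 ε → t < d → γ t j ≤ c}} := by
  classical
  have hBad : IsDef L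
      (({w : ((Fin 1 ⊕ Fin 1) ⊕ (Unit ⊕ (Fin m ⊕ Fin m))) → F | w ∘ Sum.inr ∈ GammaSet ε γ} ∩
        {w | w (Sum.inr (Sum.inl ())) < w (Sum.inl (Sum.inr 0))}) ∩
        {w | w (Sum.inl (Sum.inl 0)) < w (Sum.inr (Sum.inr j))}) :=
    ((isDef_relabel hΓ Sum.inr).inter
      (isDef_ltc hlt (Sum.inr (Sum.inl ())) (Sum.inl (Sum.inr 0)))).inter
      (isDef_ltc hlt (Sum.inl (Sum.inl 0)) (Sum.inr (Sum.inr j)))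
  have hMid : IsDef L
      ({u : Fin 1 ⊕ Fin 1 → F | 0 < u (Sum.inr 0)} ∩
        {u : Fin 1 ⊕ Fin 1 → F | ∃ z : Unit ⊕ (Fin m ⊕ Fin m) → F, Sum.elim u z ∈
          (({w : ((Fin 1 ⊕ Fin 1) ⊕ (Unit ⊕ (Fin m ⊕ Fin m))) → F |
              w ∘ Sum.inr ∈ GammaSet ε γ} ∩
            {w | w (Sum.inr (Sum.inl ())) < w (Sum.inl (Sum.inr 0))}) ∩
            {w | w (Sum.inl (Sum.inl 0)) < w (Sum.inr (Sum.inr j))})}ᶜ) :=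
    (isDef_Clt hlt 0 (Sum.inr 0)).inter (isDef_proj hBad).compl
  have hT := isDef_proj hMid
  have e : {v : Fin 1 → F | ∃ z : Fin 1 → F, Sum.elim v z ∈
      ({u : Fin 1 ⊕ Fin 1 → F | 0 < u (Sum.inr 0)} ∩
        {u : Fin 1 ⊕ Fin 1 → F | ∃ zz : Unit ⊕ (Fin m ⊕ Fin m) → F, Sum.elim u zz ∈
          (({w : ((Fin 1 ⊕ Fin 1) ⊕ (Unit ⊕ (Fin m ⊕ Fin m))) → F |
              w ∘ Sum.inr ∈ GammaSet ε γ} ∩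
            {w | w (Sum.inr (Sum.inl ())) < w (Sum.inl (Sum.inr 0))}) ∩
            {w | w (Sum.inl (Sum.inl 0)) < w (Sum.inr (Sum.inr j))})}ᶜ)} =
      {v : Fin 1 → F |
        v 0 ∈ {c : F | ∃ d, 0 < d ∧ ∀ t, t ∈ Set.Ioo 0 ε → t < d → γ t j ≤ c}} := by
    ext v
    constructor
    · rintro ⟨z, h0, hno⟩
      rw [Set.mem_setOf_eq, Sum.elim_inr] at h0
      rw [Set.mem_compl_iff] at hno
      refine ⟨z 0, h0, fun t ht htd => ?_⟩
      by_contra hgt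
      push_neg at hgt
      refine hno ⟨Sum.elim (fun _ => t) (γ t), ⟨?_, ?_⟩, ?_⟩
      · rw [Set.mem_setOf_eq, Sum.elim_comp_inr]
        exact ⟨ht, by rw [Sum.elim_comp_inr, Sum.elim_inl]⟩
      · simp only [Set.mem_setOf_eq, Sum.elim_inr, Sum.elim_inl]
        exact htd
      · simp only [Set.mem_setOf_eq, Sum.elim_inr, Sum.elim_inl]
        exact hgt
    · rintro ⟨d, hd, hall⟩
      refine ⟨fun _ => d, ?_, ?_⟩
      · simp only [Set.mem_setOf_eq, Sum.elim_inr]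
        exact hd
      · rw [Set.mem_compl_iff]
        rintro ⟨zz, ⟨h1, h2⟩, h3⟩
        rw [Set.mem_setOf_eq, Sum.elim_comp_inr] at h1
        simp only [Set.mem_setOf_eq, Sum.elim_inr, Sum.elim_inl] at h2 h3
        obtain ⟨ht, hgr⟩ := h1
        have hle := hall (zz (Sum.inl ())) ht h2
        rw [hgr] at hle
        exact absurd h3 (not_lt.2 hle)
  rwa [e] at hT

lemma defS (hΓ : IsDef L (GammaSet ε γ)) (hlt : IsDef L {v : Fin 2 → F | v 0 < v 1})
    (b : F) (j : Fin m ⊕ Fin m) :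
    IsDef L {v : Fin 1 → F | v 0 ∈ {t : F | t ∈ Set.Ioo 0 ε ∧ γ t j ≤ b}} := by
  classical
  have hB : IsDef L
      (({w : (Fin 1 ⊕ (Unit ⊕ (Fin m ⊕ Fin m))) → F | w ∘ Sum.inr ∈ GammaSet ε γ} ∩
        {w | w (Sum.inr (Sum.inl ())) = w (Sum.inl 0)}) ∩
        {w | b < w (Sum.inr (Sum.inr j))}ᶜ) :=
    ((isDef_relabel hΓ Sum.inr).inter (isDef_eqq (Sum.inr (Sum.inl ())) (Sum.inl 0))).inter
      (isDef_Clt hlt b (Sum.inr (Sum.inr j))).compl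
  have hT := isDef_proj hB
  have e : {v : Fin 1 → F | ∃ z : Unit ⊕ (Fin m ⊕ Fin m) → F, Sum.elim v z ∈
      (({w : (Fin 1 ⊕ (Unit ⊕ (Fin m ⊕ Fin m))) → F | w ∘ Sum.inr ∈ GammaSet ε γ} ∩
        {w | w (Sum.inr (Sum.inl ())) = w (Sum.inl 0)}) ∩
        {w | b < w (Sum.inr (Sum.inr j))}ᶜ)} =
      {v : Fin 1 → F | v 0 ∈ {t : F | t ∈ Set.Ioo 0 ε ∧ γ t j ≤ b}} := by
    ext v
    constructor
    · rintro ⟨z, ⟨h1, h2⟩, h3⟩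
      rw [Set.mem_setOf_eq, Sum.elim_comp_inr] at h1
      simp only [Set.mem_setOf_eq, Sum.elim_inr, Sum.elim_inl] at h2
      simp only [Set.mem_compl_iff, Set.mem_setOf_eq, Sum.elim_inr] at h3
      obtain ⟨ht, hgr⟩ := h1
      rw [h2] at ht hgr
      refine ⟨ht, ?_⟩
      rw [hgr]
      exact not_lt.1 h3
    · rintro ⟨ht, hle⟩
      refine ⟨Sum.elim (fun _ => v 0) (γ (v 0)), ⟨?_, ?_⟩, ?_⟩
      · rw [Set.mem_setOf_eq, Sum.elim_comp_inr]
        exact ⟨ht, by rw [Sum.elim_comp_inr, Sum.elim_inl]⟩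
      · simp only [Set.mem_setOf_eq, Sum.elim_inr, Sum.elim_inl]
      · simp only [Set.mem_compl_iff, Set.mem_setOf_eq, Sum.elim_inr]
        exact not_lt.2 hle
  rwa [e] at hT

lemma defLB (hΓ : IsDef L (GammaSet ε γ)) (hlt : IsDef L {v : Fin 2 → F | v 0 < v 1})
    (hplus : IsDef L {v : Fin 3 → F | v 0 + v 1 = v 2}) (x : Fin m → F) (δ : F) :
    IsDef L {v : Fin 1 → F | v 0 ∈ {a : F | ∃ r, 0 < r ∧ ∀ t,
      (t ∈ Set.Ioo 0 ε ∧ t ≤ δ ∧ ∀ i, |γ t (Sum.inl i) - x i| < r) → a ≤ t}} := by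
  classical
  have hBad : IsDef L
      ((({w : ((Fin 1 ⊕ Fin 1) ⊕ (Unit ⊕ (Fin m ⊕ Fin m))) → F | w ∘ Sum.inr ∈ GammaSet ε γ} ∩
        {w | δ < w (Sum.inr (Sum.inl ()))}ᶜ) ∩
        (⋂ i : Fin m, {w | |w (Sum.inr (Sum.inr (Sum.inl i))) - x i| < w (Sum.inl (Sum.inr 0))})) ∩
        {w | w (Sum.inr (Sum.inl ())) < w (Sum.inl (Sum.inl 0))}) :=
    (((isDef_relabel hΓ Sum.inr).inter (isDef_Clt hlt δ (Sum.inr (Sum.inl ()))).compl).inter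
      (isDef_iInter fun i =>
        isDef_absLt hlt hplus (x i) (Sum.inr (Sum.inr (Sum.inl i))) (Sum.inl (Sum.inr 0)))).inter
      (isDef_ltc hlt (Sum.inr (Sum.inl ())) (Sum.inl (Sum.inl 0)))
  have hMid : IsDef L
      ({u : Fin 1 ⊕ Fin 1 → F | 0 < u (Sum.inr 0)} ∩
        {u : Fin 1 ⊕ Fin 1 → F | ∃ z : Unit ⊕ (Fin m ⊕ Fin m) → F, Sum.elim u z ∈
          ((({w : ((Fin 1 ⊕ Fin 1) ⊕ (Unit ⊕ (Fin m ⊕ Fin m))) → F |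
              w ∘ Sum.inr ∈ GammaSet ε γ} ∩
            {w | δ < w (Sum.inr (Sum.inl ()))}ᶜ) ∩
            (⋂ i : Fin m,
              {w | |w (Sum.inr (Sum.inr (Sum.inl i))) - x i| < w (Sum.inl (Sum.inr 0))})) ∩
            {w | w (Sum.inr (Sum.inl ())) < w (Sum.inl (Sum.inl 0))})}ᶜ) :=
    (isDef_Clt hlt 0 (Sum.inr 0)).inter (isDef_proj hBad).compl
  have hT := isDef_proj hMid
  have e : {v : Fin 1 → F | ∃ z : Fin 1 → F, Sum.elim v z ∈
      ({u : Fin 1 ⊕ Fin 1 → F | 0 < u (Sum.inr 0)} ∩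
        {u : Fin 1 ⊕ Fin 1 → F | ∃ zz : Unit ⊕ (Fin m ⊕ Fin m) → F, Sum.elim u zz ∈
          ((({w : ((Fin 1 ⊕ Fin 1) ⊕ (Unit ⊕ (Fin m ⊕ Fin m))) → F |
              w ∘ Sum.inr ∈ GammaSet ε γ} ∩
            {w | δ < w (Sum.inr (Sum.inl ()))}ᶜ) ∩
            (⋂ i : Fin m,
              {w | |w (Sum.inr (Sum.inr (Sum.inl i))) - x i| < w (Sum.inl (Sum.inr 0))})) ∩
            {w | w (Sum.inr (Sum.inl ())) < w (Sum.inl (Sum.inl 0))})}ᶜ)} =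
      {v : Fin 1 → F | v 0 ∈ {a : F | ∃ r, 0 < r ∧ ∀ t,
        (t ∈ Set.Ioo 0 ε ∧ t ≤ δ ∧ ∀ i, |γ t (Sum.inl i) - x i| < r) → a ≤ t}} := by
    ext v
    constructor
    · rintro ⟨z, h0, hno⟩
      rw [Set.mem_setOf_eq, Sum.elim_inr] at h0
      rw [Set.mem_compl_iff] at hno
      refine ⟨z 0, h0, fun t htt => ?_⟩
      obtain ⟨htI, htδ, hbox⟩ := htt
      by_contra hgt
      push_neg at hgt
      refine hno ⟨Sum.elim (fun _ => t) (γ t), ⟨⟨?_, ?_⟩, ?_⟩, ?_⟩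
      · rw [Set.mem_setOf_eq, Sum.elim_comp_inr]
        exact ⟨htI, by rw [Sum.elim_comp_inr, Sum.elim_inl]⟩
      · simp only [Set.mem_compl_iff, Set.mem_setOf_eq, Sum.elim_inr, Sum.elim_inl]
        exact not_lt.2 htδ
      · simp only [Set.mem_iInter, Set.mem_setOf_eq, Sum.elim_inr, Sum.elim_inl]
        exact hbox
      · simp only [Set.mem_setOf_eq, Sum.elim_inr, Sum.elim_inl]
        exact hgt
    · rintro ⟨r, hr, hall⟩
      refine ⟨fun _ => r, ?_, ?_⟩
      · simp only [Set.mem_setOf_eq, Sum.elim_inr]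
        exact hr
      · rw [Set.mem_compl_iff]
        rintro ⟨zz, ⟨⟨h1, h2⟩, h3⟩, h4⟩
        rw [Set.mem_setOf_eq, Sum.elim_comp_inr] at h1
        simp only [Set.mem_compl_iff, Set.mem_setOf_eq, Sum.elim_inr, Sum.elim_inl] at h2
        simp only [Set.mem_iInter, Set.mem_setOf_eq, Sum.elim_inr, Sum.elim_inl] at h3
        simp only [Set.mem_setOf_eq, Sum.elim_inr, Sum.elim_inl] at h4
        obtain ⟨ht, hgr⟩ := h1
        have hbox : ∀ i, |γ (zz (Sum.inl ())) (Sum.inl i) - x i| < r := by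
          intro i
          rw [hgr]
          exact h3 i
        have hle := hall (zz (Sum.inl ())) ⟨ht, not_lt.1 h2, hbox⟩
        exact absurd h4 (not_lt.2 hle)
  rwa [e] at hT

lemma defGammaSwap (hΓ : IsDef L (GammaSet ε γ)) :
    IsDef L (GammaSet ε (fun t => γ t ∘ Sum.swap)) := by
  have h := isDef_relabel hΓ (Sum.map id Sum.swap)
  have e : {v : (Unit ⊕ (Fin m ⊕ Fin m)) → F | v ∘ Sum.map id Sum.swap ∈ GammaSet ε γ} =
      GammaSet ε (fun t => γ t ∘ Sum.swap) := by
    ext v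
    constructor
    · rintro ⟨h1, h2⟩
      refine ⟨h1, ?_⟩
      funext i
      have := congrFun h2 (Sum.swap i)
      simpa [Sum.swap_swap] using this
    · rintro ⟨h1, h2⟩
      refine ⟨h1, ?_⟩
      funext i
      have := congrFun h2 (Sum.swap i)
      simpa [Sum.swap_swap] using this
  rwa [e] at h

end Tools4
section Tools5

variable {F : Type*} [Field F] [LinearOrder F] [IsStrictOrderedRing F] [TopologicalSpace F] [OrderTopology F]
  {L : FirstOrder.Language} [L.Structure F]

lemma single_coord_nhds {m : ℕ} (y₀ : Fin m → F) (i : Fin m) {r : F} (hr : 0 < r) :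
    {y : Fin m → F | |y i - y₀ i| < r} ∈ nhds y₀ := by
  have e : {y : Fin m → F | |y i - y₀ i| < r} =
      (fun y : Fin m → F => y i) ⁻¹' Set.Ioo (y₀ i - r) (y₀ i + r) := by
    ext y
    simp only [Set.mem_setOf_eq, Set.mem_preimage, Set.mem_Ioo, abs_sub_lt_iff]
    constructor
    · rintro ⟨h1, h2⟩; constructor <;> linarith
    · rintro ⟨h1, h2⟩; constructor <;> linarith
  rw [e]
  refine (isOpen_Ioo.preimage (continuous_apply i)).mem_nhds ?_
  constructor <;> simp <;> linarith

lemma K_closed (hdc : DefinablyComplete (F := F) L)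
    {m : ℕ} {ε δ : F} {γ : F → (Fin m ⊕ Fin m → F)} (hδ : 0 < δ) (hδε : δ < ε)
    (hcont : ContinuousOn (fun t => γ t ∘ Sum.inl) (Set.Ioo 0 ε))
    {p : Fin m → F}
    (hαp : Filter.Tendsto (fun t => γ t ∘ Sum.inl) (nhdsWithin 0 (Set.Ioo 0 ε)) (nhds p))
    (hLBdef : ∀ x : Fin m → F, IsDef L {v : Fin 1 → F | v 0 ∈ {a : F | ∃ r, 0 < r ∧ ∀ t,
      (t ∈ Set.Ioo 0 ε ∧ t ≤ δ ∧ ∀ i, |γ t (Sum.inl i) - x i| < r) → a ≤ t}}) :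
    IsClosed {x : Fin m → F | (∃ t, t ∈ Set.Ioo 0 ε ∧ t ≤ δ ∧ γ t ∘ Sum.inl = x) ∨ x = p} := by
  refine isClosed_of_closure_subset ?_
  intro x hx
  by_cases hxp : x = p
  · exact Or.inr hxp
  have hne : ∃ i, x i ≠ p i := by
    by_contra h; push_neg at h; exact hxp (funext h)
  obtain ⟨i₀, hi₀⟩ := hne
  set η₀ := |x i₀ - p i₀| with hη₀
  have hη₀pos : 0 < η₀ := abs_pos.2 (sub_ne_zero.2 hi₀)
  have hAne : ∀ r, 0 < r →
      ∃ t, t ∈ Set.Ioo 0 ε ∧ t ≤ δ ∧ ∀ i, |γ t (Sum.inl i) - x i| < r := by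
    intro r hr
    have hbox : IsOpen {y : Fin m → F | ∀ i, |y i - x i| < min r η₀} := isOpen_box x _
    have hxbox : x ∈ {y : Fin m → F | ∀ i, |y i - x i| < min r η₀} := by
      intro i; simpa using lt_min hr hη₀pos
    obtain ⟨y, hybox, hyK⟩ := (mem_closure_iff.1 hx) _ hbox hxbox
    rcases hyK with ⟨t, htI, htδ, hty⟩ | rfl
    · refine ⟨t, htI, htδ, fun i => ?_⟩
      rw [show γ t (Sum.inl i) = y i from congrFun hty i]
      exact lt_of_lt_of_le (hybox i) (min_le_left _ _)
    · exfalso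
      have h1 := lt_of_lt_of_le (hybox i₀) (min_le_right _ _)
      rw [abs_sub_comm] at h1
      exact lt_irrefl _ h1
  set LB := {a : F | ∃ r, 0 < r ∧ ∀ t,
      (t ∈ Set.Ioo 0 ε ∧ t ≤ δ ∧ ∀ i, |γ t (Sum.inl i) - x i| < r) → a ≤ t} with hLB
  have hLB0 : (0 : F) ∈ LB := ⟨1, one_pos, fun t ht => ht.1.1.le⟩
  have hub : δ ∈ upperBounds LB := by
    rintro a ⟨r, hr, hall⟩
    obtain ⟨t, htP⟩ := hAne r hr
    exact le_trans (hall t htP) htP.2.1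
  obtain ⟨ts, hts⟩ := (hdc LB (hLBdef x) ⟨0, hLB0⟩).1 ⟨δ, hub⟩
  have htsδ : ts ≤ δ := hts.2 hub
  have htspos : 0 < ts := by
    by_contra hle; push_neg at hle
    have hV : {y : Fin m → F | |y i₀ - p i₀| < η₀ / 2} ∈ nhds p :=
      single_coord_nhds p i₀ (half_pos hη₀pos)
    have hev : ∀ᶠ t in nhdsWithin 0 (Set.Ioo 0 ε),
        |(γ t ∘ Sum.inl) i₀ - p i₀| < η₀ / 2 := hαp hV
    obtain ⟨θ, hθ, hθall⟩ := exists_forall_of_eventually hev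
    have hex : ∃ t, (t ∈ Set.Ioo 0 ε ∧ t ≤ δ ∧ ∀ i, |γ t (Sum.inl i) - x i| < η₀ / 2) ∧
        t < θ := by
      by_contra hno; push_neg at hno
      have hθLB : θ ∈ LB := ⟨η₀ / 2, half_pos hη₀pos, fun t ht => hno t ht⟩
      have := hts.1 hθLB
      linarith
    obtain ⟨t, htP, htθ⟩ := hex
    have h1 := hθall t htP.1 htθ
    have h2 := htP.2.2 i₀
    have h3 : |x i₀ - p i₀| < η₀ := by
      calc |x i₀ - p i₀| ≤ |x i₀ - γ t (Sum.inl i₀)| + |γ t (Sum.inl i₀) - p i₀| :=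
            abs_sub_le _ _ _
      _ < η₀ / 2 + η₀ / 2 := by
            rw [abs_sub_comm]
            exact add_lt_add h2 h1
      _ = η₀ := add_halves η₀
    rw [← hη₀] at h3
    exact lt_irrefl _ h3
  have htsε : ts < ε := lt_of_le_of_lt htsδ hδε
  have htsI : ts ∈ Set.Ioo 0 ε := ⟨htspos, htsε⟩
  have hmain : γ ts ∘ Sum.inl = x := by
    by_contra hne2
    have hex : ∃ i, (γ ts ∘ Sum.inl) i ≠ x i := by
      by_contra h; push_neg at h; exact hne2 (funext h)
    obtain ⟨i₁, hi₁⟩ := hex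
    set c := |(γ ts ∘ Sum.inl) i₁ - x i₁| with hc
    have hcpos : 0 < c := abs_pos.2 (sub_ne_zero.2 hi₁)
    have hct : ContinuousWithinAt (fun t => γ t ∘ Sum.inl) (Set.Ioo 0 ε) ts := hcont ts htsI
    have hW : {y : Fin m → F | |y i₁ - (γ ts ∘ Sum.inl) i₁| < c / 2} ∈
        nhds (γ ts ∘ Sum.inl) := single_coord_nhds _ i₁ (half_pos hcpos)
    have hev := hct hW
    rw [Filter.mem_map, mem_nhdsWithin] at hev
    obtain ⟨W, hWo, hWts, hWsub⟩ := hev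
    obtain ⟨l', u', hlu', hsubW⟩ := mem_nhds_iff_exists_Ioo_subset.1 (hWo.mem_nhds hWts)
    set u := min (ts - l') (u' - ts) with hu
    have hupos : 0 < u := lt_min (by linarith [hlu'.1]) (by linarith [hlu'.2])
    have hAvoid : ∀ s, s ∈ Set.Ioo 0 ε → ts - u < s → s < ts + u →
        ¬(∀ i, |γ s (Sum.inl i) - x i| < c / 2) := by
      intro s hsI h1 h2 hboxs
      have hul : u ≤ ts - l' := min_le_left _ _
      have hur : u ≤ u' - ts := min_le_right _ _
      have hsW : s ∈ W := hsubW ⟨by linarith, by linarith⟩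
      have hmem := hWsub ⟨hsW, hsI⟩
      have h3 := hboxs i₁
      have h4 : c < c := by
        calc c = |(γ ts ∘ Sum.inl) i₁ - x i₁| := hc
        _ ≤ |(γ ts ∘ Sum.inl) i₁ - (γ s ∘ Sum.inl) i₁| + |(γ s ∘ Sum.inl) i₁ - x i₁| :=
              abs_sub_le _ _ _
        _ < c / 2 + c / 2 := by
              refine add_lt_add ?_ h3
              rw [abs_sub_comm]
              exact hmem
        _ = c := add_halves c
      exact lt_irrefl _ h4
    have hex2 : ∃ a ∈ LB, ts - u < a := by
      by_contra hno; push_neg at hno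
      have : ts ≤ ts - u := hts.2 fun a ha => hno a ha
      linarith
    obtain ⟨a, ⟨r₀, hr₀, ha⟩, hagt⟩ := hex2
    have hmem2 : ts + u ∈ LB := by
      refine ⟨min r₀ (c / 2), lt_min hr₀ (half_pos hcpos), fun t ht => ?_⟩
      obtain ⟨htI', htδ', hbox'⟩ := ht
      have hta : a ≤ t := ha t ⟨htI', htδ', fun i => lt_of_lt_of_le (hbox' i) (min_le_left _ _)⟩
      have h1 : ts - u < t := lt_of_lt_of_le hagt hta
      by_contra hlt2; push_neg at hlt2
      exact hAvoid t htI' h1 hlt2 (fun i => lt_of_lt_of_le (hbox' i) (min_le_right _ _))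
    have := hts.1 hmem2
    linarith
  exact Or.inl ⟨ts, htsI, htsδ, hmain⟩

end Tools5
section Tools6

variable {F : Type*} [Field F] [LinearOrder F] [IsStrictOrderedRing F] [TopologicalSpace F] [OrderTopology F]
  {L : FirstOrder.Language} [L.Structure F]

lemma main_case
    (hfield : IsOrderedFieldExpansion (F := F) L)
    (hdc : DefinablyComplete (F := F) L) (hlo : LocallyOMinimal (F := F) L)
    {m : ℕ} {X : Set (Fin m → F)} {E : Set (Fin m ⊕ Fin m → F)}
    (hE : IsDefEquivOn L X E)
    (hEproper : IsDefProper L E X (fun v => v ∘ Sum.inl))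
    {ε : F} (hε : 0 < ε) {γ : F → (Fin m ⊕ Fin m → F)} (hγ : IsDefCurve L ε E γ)
    {p : Fin m → F} (hp : p ∈ X)
    (hαp : CurveTendsto ε (fun t => γ t ∘ Sum.inl) p) :
    ∃ Lp : Fin m ⊕ Fin m → F,
      (Lp ∘ Sum.inl ∈ X) ∧ (Lp ∘ Sum.inr ∈ X) ∧ CurveTendsto ε γ Lp := by
  obtain ⟨hΓ0, hγcont, hγmaps⟩ := hγ
  have hΓ : IsDef L (GammaSet ε γ) := hΓ0
  have hlt := hfield.1
  have hplus := hfield.2.1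
  have hproj : Continuous (fun v : Fin m ⊕ Fin m → F => v ∘ Sum.inl) :=
    continuous_pi fun i => continuous_apply _
  have hcont : ContinuousOn (fun t => γ t ∘ Sum.inl) (Set.Ioo 0 ε) :=
    hproj.comp_continuousOn hγcont
  have hbox1 : {y : Fin m → F | ∀ i, |y i - p i| < 1} ∈ nhds p :=
    (isOpen_box p 1).mem_nhds (fun i => by simpa using one_pos)
  have hev : ∀ᶠ t in nhdsWithin 0 (Set.Ioo 0 ε), ∀ i, |(γ t ∘ Sum.inl) i - p i| < 1 :=
    hαp hbox1
  obtain ⟨δ₂, hδ₂, hδ₂all⟩ := exists_forall_of_eventually hev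
  set δ := min δ₂ ε / 2 with hδdef
  have hδpos : 0 < δ := half_pos (lt_min hδ₂ hε)
  have hδε : δ < ε := lt_of_lt_of_le (half_lt_self (lt_min hδ₂ hε)) (min_le_right _ _)
  have hδδ₂ : δ < δ₂ := lt_of_lt_of_le (half_lt_self (lt_min hδ₂ hε)) (min_le_left _ _)
  set K := {x : Fin m → F | (∃ t, t ∈ Set.Ioo 0 ε ∧ t ≤ δ ∧ γ t ∘ Sum.inl = x) ∨ x = p}
    with hK
  have hKdef : IsDef L K := defK hΓ hlt δ p
  have hKX : K ⊆ X := by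
    rintro x (⟨t, htI, htδ, rfl⟩ | rfl)
    · exact (hE.2.1 _ (hγmaps htI)).1
    · exact hp
  have hKcl : IsClosed K := K_closed hdc hδpos hδε hcont hαp (fun x => defLB hΓ hlt hplus x δ)
  have hKbdd : IsBdd K := by
    obtain ⟨M, hM⟩ := Finset.exists_le (Finset.univ.image fun i : Fin m => |p i| + 1)
    refine ⟨-M, M, ?_⟩
    rintro y hy i
    have hyb : |y i - p i| < 1 := by
      rcases hy with ⟨t, htI, htδ, rfl⟩ | rfl
      · exact hδ₂all t htI (lt_of_le_of_lt htδ hδδ₂) i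
      · simpa using one_pos
    have hMi : |p i| + 1 ≤ M := hM _ (Finset.mem_image_of_mem _ (Finset.mem_univ i))
    have h2 : |y i| < |p i| + 1 := by
      have h3 : |y i| ≤ |y i - p i| + |p i| := by
        have := abs_add_le (y i - p i) (p i)
        simpa using this
      linarith
    have hyM : |y i| ≤ M := le_trans h2.le hMi
    exact ⟨neg_le_of_abs_le hyM, le_of_abs_le hyM⟩
  obtain ⟨hPcl, hPbdd⟩ := hEproper K hKdef hKX hKcl hKbdd
  have hγP : ∀ t, t ∈ Set.Ioo 0 ε → t < δ →
      γ t ∈ {x : Fin m ⊕ Fin m → F | x ∈ E ∧ (fun v => v ∘ Sum.inl) x ∈ K} :=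
    fun t ht htδ => ⟨hγmaps ht, Or.inl ⟨t, ht, htδ.le, rfl⟩⟩
  obtain ⟨a, b, hab⟩ := hPbdd
  have hlim : ∀ j : Fin m ⊕ Fin m, ∃ l,
      Filter.Tendsto (fun t => γ t j) (nhdsWithin 0 (Set.Ioo 0 ε)) (nhds l) := by
    intro j
    refine limit_exists hdc hlo (fun t => γ t j) (defU hΓ hlt j)
      (fun b' => defS hΓ hlt b' j) (a := a) (b := b) hδpos hε ?_
    intro t ht htδ
    exact hab (γ t) (hγP t ht htδ) j
  choose Lp hLp using hlim
  have hγL : CurveTendsto ε γ Lp := tendsto_pi_nhds.2 hLp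
  haveI := nhdsWithin_Ioo_zero_neBot (F := F) hε
  have hLP : Lp ∈ {x : Fin m ⊕ Fin m → F | x ∈ E ∧ (fun v => v ∘ Sum.inl) x ∈ K} := by
    refine hPcl.mem_of_tendsto hγL ?_
    filter_upwards [eventually_lt_of_pos hδpos, self_mem_nhdsWithin] with t h1 h2
    exact hγP t h2 h1
  exact ⟨Lp, (hE.2.1 _ hLP.1).1, (hE.2.1 _ hLP.1).2, hγL⟩

end Tools6
/-- for a definable equivalence relation E definably proper over X, a
definable curve in E has completable first component iff it has completable second
component, and the curve then converges to the pair of limits. -/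
theorem statement_11
    {F : Type*} [Field F] [LinearOrder F] [IsStrictOrderedRing F] [TopologicalSpace F] [OrderTopology F]
    (L : FirstOrder.Language) [L.Structure F]
    (hfield : IsOrderedFieldExpansion (F := F) L)
    (hdc : DefinablyComplete (F := F) L)
    (hlo : LocallyOMinimal (F := F) L)
    {m : ℕ} (X : Set (Fin m → F)) (E : Set (Fin m ⊕ Fin m → F))
    (hXdef : IsDef L X) (hE : IsDefEquivOn L X E)
    (hEproper : IsDefProper L E X (fun v => v ∘ Sum.inl))
    (ε : F) (hε : 0 < ε) (γ : F → (Fin m ⊕ Fin m → F)) (hγ : IsDefCurve L ε E γ)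
    (hc : Completable ε X (fun t => γ t ∘ Sum.inl) ∨
          Completable ε X (fun t => γ t ∘ Sum.inr)) :
    (Completable ε X (fun t => γ t ∘ Sum.inl) ∧
     Completable ε X (fun t => γ t ∘ Sum.inr)) ∧
    ∀ p q : Fin m → F, CurveTendsto ε (fun t => γ t ∘ Sum.inl) p →
      CurveTendsto ε (fun t => γ t ∘ Sum.inr) q →
      CurveTendsto ε γ (Sum.elim p q) := by
  have hswapcont : Continuous (fun v : Fin m ⊕ Fin m → F => v ∘ Sum.swap) :=
    continuous_pi fun i => continuous_apply _
  set γ' : F → (Fin m ⊕ Fin m → F) := fun t => γ t ∘ Sum.swap with hγ'def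
  have hγ' : IsDefCurve L ε E γ' := by
    refine ⟨defGammaSwap hγ.1, hswapcont.comp_continuousOn hγ.2.1, ?_⟩
    intro t ht
    have h1 : Sum.elim (γ t ∘ Sum.inl) (γ t ∘ Sum.inr) ∈ E := by
      rw [Sum.elim_comp_inl_inr]; exact hγ.2.2 ht
    have h2 := hE.2.2.2.1 _ _ h1
    show γ t ∘ Sum.swap ∈ E
    have e : γ t ∘ Sum.swap = Sum.elim (γ t ∘ Sum.inr) (γ t ∘ Sum.inl) :=
      funext fun i => by cases i <;> rfl
    rw [e]; exact h2
  have hboth : Completable ε X (fun t => γ t ∘ Sum.inl) ∧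
      Completable ε X (fun t => γ t ∘ Sum.inr) := by
    rcases hc with ⟨p, hp, hαp⟩ | ⟨q, hq, hβq⟩
    · obtain ⟨Lp, h1, h2, hT⟩ := main_case hfield hdc hlo hE hEproper hε hγ hp hαp
      exact ⟨⟨Lp ∘ Sum.inl, h1, tendsto_pi_nhds.2 fun i => tendsto_pi_nhds.1 hT (Sum.inl i)⟩,
        ⟨Lp ∘ Sum.inr, h2, tendsto_pi_nhds.2 fun i => tendsto_pi_nhds.1 hT (Sum.inr i)⟩⟩
    · have hαp' : CurveTendsto ε (fun t => γ' t ∘ Sum.inl) q := by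
        have e : (fun t => γ' t ∘ Sum.inl) = fun t => γ t ∘ Sum.inr := by
          funext t i; rfl
        rw [e]; exact hβq
      obtain ⟨Lp, h1, h2, hT⟩ := main_case hfield hdc hlo hE hEproper hε hγ' hq hαp'
      have e2 : ∀ j, Filter.Tendsto (fun t => γ t j) (nhdsWithin 0 (Set.Ioo 0 ε))
          (nhds (Lp (Sum.swap j))) := by
        intro j
        have h3 := tendsto_pi_nhds.1 hT (Sum.swap j)
        have e3 : (fun t => γ' t (Sum.swap j)) = fun t => γ t j := by
          funext t
          show γ t (Sum.swap (Sum.swap j)) = γ t j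
          rw [Sum.swap_swap]
        rwa [e3] at h3
      exact ⟨⟨Lp ∘ Sum.inr, h2, tendsto_pi_nhds.2 fun i => e2 (Sum.inl i)⟩,
        ⟨Lp ∘ Sum.inl, h1, tendsto_pi_nhds.2 fun i => e2 (Sum.inr i)⟩⟩
  refine ⟨hboth, ?_⟩
  intro p q h1 h2
  refine tendsto_pi_nhds.2 fun j => ?_
  cases j with
  | inl i => exact tendsto_pi_nhds.1 h1 i
  | inr i => exact tendsto_pi_nhds.1 h2 i
end
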